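/- The greedy matching on a finite weighted graph (repeatedly selecting the maximum-weight remaining edge with nonnegative weight and deleting its endpoints) achieves total weight at least half the weight of a maximum-weight matching. -/

import Mathlib

/-- Edges (finsets of vertices) are pairwise vertex-disjoint. -/
def IsMatchingF {α : Type*} [DecidableEq α] (M : Finset (Finset α)) : Prop :=
  ∀ e ∈ M, ∀ f ∈ M, e ≠ f → e ∩ f = ∅

/-- Greedy matching: process edges in the given (decreasing-weight) order,
adding an edge whenever it is disjoint from all previously selected edges. -/
def greedyAux {α : Type*} [DecidableEq α] :
    List (Finset α) → List (Finset α) → List (Finset α)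
  | acc, [] => acc
  | acc, e :: rest =>
    if ∀ f ∈ acc, e ∩ f = ∅ then greedyAux (e :: acc) rest
    else greedyAux acc rest

section GreedyHelpers
variable {α : Type*} [DecidableEq α]

lemma mem_greedyAux_acc (acc rest : List (Finset α)) :
    ∀ x ∈ acc, x ∈ greedyAux acc rest := by
  induction rest generalizing acc with
  | nil => simp [greedyAux]
  | cons e r ih =>
    intro x hx
    unfold greedyAux
    split
    · exact ih _ x (List.mem_cons_of_mem _ hx)
    · exact ih _ x hx

lemma mem_greedyAux (acc rest : List (Finset α)) :
    ∀ x ∈ greedyAux acc rest, x ∈ acc ∨ x ∈ rest := by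
  induction rest generalizing acc with
  | nil => simp [greedyAux]
  | cons e r ih =>
    intro x hx
    unfold greedyAux at hx
    split at hx
    · rcases ih _ x hx with h | h
      · rcases List.mem_cons.mp h with h | h
        · right; simp [h]
        · left; exact h
      · right; exact List.mem_cons_of_mem _ h
    · rcases ih _ x hx with h | h
      · left; exact h
      · right; exact List.mem_cons_of_mem _ h

lemma greedyAux_pairwise (acc rest : List (Finset α))
    (h : acc.Pairwise (fun a b => a ∩ b = ∅)) :
    (greedyAux acc rest).Pairwise (fun a b => a ∩ b = ∅) := by
  induction rest generalizing acc with
  | nil => simpa [greedyAux]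
  | cons e r ih =>
    unfold greedyAux
    split
    · rename_i hcond
      exact ih _ (List.pairwise_cons.mpr ⟨hcond, h⟩)
    · exact ih _ h

lemma greedyAux_block (w : Finset α → ℝ) (acc rest : List (Finset α))
    (hsort : rest.Pairwise (fun e f => w f ≤ w e))
    (hacc : ∀ f ∈ acc, ∀ e ∈ rest, w e ≤ w f)
    (hne : ∀ e ∈ rest, e ≠ ∅) :
    ∀ e ∈ rest, ∃ f ∈ greedyAux acc rest, e ∩ f ≠ ∅ ∧ w e ≤ w f := by
  induction rest generalizing acc with
  | nil => simp
  | cons a r ih =>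
    intro e he
    rw [List.pairwise_cons] at hsort
    unfold greedyAux
    split
    · rename_i hcond
      rcases List.mem_cons.mp he with rfl | he'
      · exact ⟨e, mem_greedyAux_acc _ _ e (List.mem_cons_self),
          by simpa using hne e (List.mem_cons_self), le_refl _⟩
      · exact ih (a :: acc) hsort.2
          (by
            intro f hf e' he2
            rcases List.mem_cons.mp hf with rfl | hf'
            · exact hsort.1 e' he2
            · exact hacc f hf' e' (List.mem_cons_of_mem _ he2))
          (fun e' he2 => hne e' (List.mem_cons_of_mem _ he2)) e he'
    · rename_i hcond
      push_neg at hcond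
      rcases List.mem_cons.mp he with rfl | he'
      · obtain ⟨f, hf, hfe⟩ := hcond
        exact ⟨f, mem_greedyAux_acc _ _ f hf, hfe.ne_empty, hacc f hf e (List.mem_cons_self)⟩
      · exact ih acc hsort.2 (fun f hf e' he2 => hacc f hf e' (List.mem_cons_of_mem _ he2))
          (fun e' he2 => hne e' (List.mem_cons_of_mem _ he2)) e he'

end GreedyHelpers

/-- The greedy matching on a finite weighted graph (edges of
cardinality 2, nonnegative weights, processed in decreasing weight order)
achieves at least half the weight of any (hence of a maximum-weight) matching. -/
theorem greedy_matching_half_approx {α : Type*} [DecidableEq α]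
    (w : Finset α → ℝ) (L : List (Finset α)) (hnd : L.Nodup)
    (hsort : L.Pairwise (fun e f => w f ≤ w e))
    (hcard : ∀ e ∈ L, e.card = 2)
    (hnonneg : ∀ e ∈ L, 0 ≤ w e)
    (M : Finset (Finset α)) (hML : ∀ e ∈ M, e ∈ L) (hM : IsMatchingF M) :
    ∑ e ∈ M, w e ≤ 2 * ((greedyAux [] L).map w).sum := by
  classical
  set G := greedyAux [] L with hG
  have hGL : ∀ x ∈ G, x ∈ L := fun x hx => by
    rcases mem_greedyAux [] L x hx with h | h
    · simp at h
    · exact h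
  have hGcard : ∀ x ∈ G, x.card = 2 := fun x hx => hcard x (hGL x hx)
  have hGpos : ∀ x ∈ G, 0 ≤ w x := fun x hx => hnonneg x (hGL x hx)
  have hGpair : G.Pairwise (fun a b => a ∩ b = ∅) :=
    greedyAux_pairwise [] L List.Pairwise.nil
  have hGnd : G.Nodup := by
    refine hGpair.imp_of_mem ?_
    intro a b ha hb hab h
    subst h
    rw [Finset.inter_self] at hab
    have := hGcard a ha
    simp [hab] at this
  have hblock : ∀ e ∈ L, ∃ f ∈ G, e ∩ f ≠ ∅ ∧ w e ≤ w f :=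
    greedyAux_block w [] L hsort (by simp) (fun e he h => by
      have := hcard e he; simp [h] at this)
  have hex : ∀ e : Finset α, ∃ f, e ∈ L → f ∈ G ∧ e ∩ f ≠ ∅ ∧ w e ≤ w f := by
    intro e
    by_cases he : e ∈ L
    · obtain ⟨f, hf, h1, h2⟩ := hblock e he
      exact ⟨f, fun _ => ⟨hf, h1, h2⟩⟩
    · exact ⟨∅, fun h => absurd h he⟩
  choose F hF using hex
  have step1 : ∑ e ∈ M, w e ≤ ∑ e ∈ M, w (F e) :=
    Finset.sum_le_sum (fun e he => (hF e (hML e he)).2.2)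
  have step2 : ∑ e ∈ M, w (F e)
      = ∑ b ∈ M.image F, (M.filter fun a => F a = b).card • w b :=
    Finset.sum_comp w F
  have himg : M.image F ⊆ G.toFinset := by
    intro b hb
    obtain ⟨e, he, rfl⟩ := Finset.mem_image.mp hb
    exact List.mem_toFinset.mpr (hF e (hML e he)).1
  have hfib : ∀ b ∈ M.image F, (M.filter fun a => F a = b).card ≤ 2 := by
    intro b hb
    have hb2 : b.card = 2 := hGcard b (List.mem_toFinset.mp (himg hb))
    have hbne : b.Nonempty := Finset.card_pos.mp (by omega)
    haveI : Inhabited α := ⟨hbne.choose⟩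
    have : (M.filter fun a => F a = b).card ≤ b.card := by
      apply Finset.card_le_card_of_injOn (fun e => (e ∩ b).toList.head!)
      · intro e he
        rw [Finset.mem_coe, Finset.mem_filter] at he
        have hne : (e ∩ b).Nonempty := by
          rw [Finset.nonempty_iff_ne_empty]
          have := (hF e (hML e he.1)).2.1
          rw [he.2] at this; exact this
        have hmem : (e ∩ b).toList.head! ∈ e ∩ b := by
          have h0 : (e ∩ b).toList ≠ [] := by
            simpa [Finset.toList_eq_nil] using hne.ne_empty
          exact Finset.mem_toList.mp (List.head!_mem_self h0)
        exact (Finset.mem_inter.mp hmem).2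
      · intro e he e' he' hee
        rw [Finset.coe_filter] at he he'
        simp only [Set.mem_setOf_eq] at he he'
        by_contra hne'
        have hv : ∀ x ∈ M, (x ∩ b).Nonempty → (x ∩ b).toList.head! ∈ x := by
          intro x hx hnx
          have h0 : (x ∩ b).toList ≠ [] := by
            simpa [Finset.toList_eq_nil] using hnx.ne_empty
          have := Finset.mem_toList.mp (List.head!_mem_self h0)
          exact (Finset.mem_inter.mp this).1
        have hne1 : (e ∩ b).Nonempty := by
          rw [Finset.nonempty_iff_ne_empty]
          have := (hF e (hML e he.1)).2.1
          rw [he.2] at this; exact this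
        have hne2 : (e' ∩ b).Nonempty := by
          rw [Finset.nonempty_iff_ne_empty]
          have := (hF e' (hML e' he'.1)).2.1
          rw [he'.2] at this; exact this
        have h1 := hv e he.1 hne1
        have h2 := hv e' he'.1 hne2
        have hee' : (e ∩ b).toList.head! = (e' ∩ b).toList.head! := hee
        rw [hee'] at h1
        have : (e' ∩ b).toList.head! ∈ e ∩ e' := Finset.mem_inter.mpr ⟨h1, h2⟩
        rw [hM e he.1 e' he'.1 hne'] at this
        exact absurd this (Finset.notMem_empty _)
    omega
  have step3 : ∑ b ∈ M.image F, (M.filter fun a => F a = b).card • w b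
      ≤ ∑ b ∈ M.image F, 2 * w b := by
    apply Finset.sum_le_sum
    intro b hb
    have hw : 0 ≤ w b := hGpos b (List.mem_toFinset.mp (himg hb))
    rw [nsmul_eq_mul]
    exact mul_le_mul_of_nonneg_right (by exact_mod_cast hfib b hb) hw
  have step4 : ∑ b ∈ M.image F, 2 * w b ≤ ∑ b ∈ G.toFinset, 2 * w b := by
    apply Finset.sum_le_sum_of_subset_of_nonneg himg
    intro b hb _
    exact mul_nonneg (by norm_num) (hGpos b (List.mem_toFinset.mp hb))
  have step5 : ∑ b ∈ G.toFinset, 2 * w b = 2 * (G.map w).sum := by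
    rw [← Finset.mul_sum]
    congr 1
    rw [List.sum_toFinset _ hGnd]
  linarith
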